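/- Let ℓ>0, r_+>0 and a∈ℝ with 0<|a|<ℓ and r_+² < |a|ℓ, let m∈ℤ, Ξ := 1−a²/ℓ² and ω_+ := maΞ/(r_+²+a²). Let δ>0 and let ω_R:(−δ,δ)→ℝ be differentiable with ω_R(0)=ω_+ and ω_R(0)·ω_R'(0) < 0. For ε∈(−δ,δ) and λ∈ℝ define E(ε,λ) := (ω_R(ε)² + ε²) − ω_R(ε)·ω_+ + mλ(ω_+ − ω_R(ε)). Then there exists ε₀∈(0,δ) such that E(ε,λ) < 0 for all ε with 0<ε<ε₀ and all λ with −(ℓ+a)/ℓ² < λ < (ℓ−a)/ℓ². -/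
import Mathlib

open Set

set_option maxHeartbeats 1000000 in
theorem stmt_1 (ℓ rp a : ℝ) (hℓ : 0 < ℓ) (hrp : 0 < rp)
    (ha0 : 0 < |a|) (ha : |a| < ℓ) (hHR : rp ^ 2 < |a| * ℓ)
    (m : ℤ) (Ξ ωp : ℝ) (hΞ : Ξ = 1 - a ^ 2 / ℓ ^ 2)
    (hωp : ωp = (m : ℝ) * a * Ξ / (rp ^ 2 + a ^ 2))
    (δ : ℝ) (hδ : 0 < δ) (ωR : ℝ → ℝ)
    (hdiff : ∀ ε ∈ Ioo (-δ) δ, DifferentiableAt ℝ ωR ε)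
    (hω0 : ωR 0 = ωp) (hsup : ωR 0 * deriv ωR 0 < 0) :
    ∃ ε₀ ∈ Ioo 0 δ, ∀ ε : ℝ, 0 < ε → ε < ε₀ → ∀ lam : ℝ,
      -(ℓ + a) / ℓ ^ 2 < lam → lam < (ℓ - a) / ℓ ^ 2 →
      (ωR ε ^ 2 + ε ^ 2) - ωR ε * ωp + (m : ℝ) * lam * (ωp - ωR ε) < 0 := by
  have ha' : a ≠ 0 := by
    intro h; rw [h] at ha0; simp at ha0
  have hℓ2 : (0:ℝ) < ℓ ^ 2 := by positivity
  have hra : (0:ℝ) < rp ^ 2 + a ^ 2 := by positivity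
  have hb2 : |a| ^ 2 = a ^ 2 := sq_abs a
  have hℓa : a ^ 2 < ℓ ^ 2 := by
    nlinarith only [mul_self_lt_mul_self (abs_nonneg a) ha, sq_abs a]
  obtain ⟨d, hd⟩ : ∃ d, d = deriv ωR 0 := ⟨_, rfl⟩
  have hωpd : ωp * d < 0 := by rw [hd, ← hω0]; exact hsup
  have hm : (m:ℝ) ≠ 0 := by
    intro h
    apply absurd hωpd
    simp [hωp, h]
  have hm2 : (0:ℝ) < (m:ℝ) ^ 2 := by positivity
  have hωp0 : ωp ≠ 0 := by
    intro h; rw [h] at hωpd; simp at hωpd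
  have hd0 : d ≠ 0 := by
    intro h; rw [h] at hωpd; simp at hωpd
  have hdabs : 0 < |d| := abs_pos.mpr hd0
  -- cleared form of ωp
  have hωpD : ωp * (ℓ ^ 2 * (rp ^ 2 + a ^ 2)) = (m:ℝ) * a * (ℓ ^ 2 - a ^ 2) := by
    rw [hωp, hΞ]
    field_simp
  have hAωpD : ((m:ℝ) * a) * ωp * (ℓ ^ 2 * (rp ^ 2 + a ^ 2))
      = (m:ℝ) ^ 2 * a ^ 2 * (ℓ ^ 2 - a ^ 2) := by
    rw [mul_assoc, hωpD]; ring
  -- sign facts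
  have hAωp : 0 < ((m:ℝ) * a) * ωp := by
    have h1 : (0:ℝ) < (m:ℝ) ^ 2 * a ^ 2 * (ℓ ^ 2 - a ^ 2) :=
      mul_pos (mul_pos hm2 (by positivity)) (by linarith only [hℓa])
    nlinarith only [hAωpD, h1, mul_pos hℓ2 hra]
  have hAd : ((m:ℝ) * a) * d < 0 := by
    rcases lt_or_gt_of_ne hωp0 with hneg | hpos
    · have hd' : 0 < d := by nlinarith only [hωpd, hneg]
      have hma : (m:ℝ) * a < 0 := by nlinarith only [hAωp, hneg]
      exact mul_neg_of_neg_of_pos hma hd'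
    · have hd' : d < 0 := by nlinarith only [hωpd, hpos]
      have hma : 0 < (m:ℝ) * a := by nlinarith only [hAωp, hpos]
      exact mul_neg_of_pos_of_neg hma hd'
  -- constants
  obtain ⟨c₀, hc₀def⟩ : ∃ c₀ : ℝ, c₀ = (m:ℝ) ^ 2 * |a| * (ℓ - |a|) * (|a| * ℓ - rp ^ 2) := ⟨_, rfl⟩
  have hc₀ : 0 < c₀ := by
    have h1 : 0 < ℓ - |a| := by linarith only [ha]
    have h2 : 0 < |a| * ℓ - rp ^ 2 := by linarith only [hHR]
    rw [hc₀def]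
    exact mul_pos (mul_pos (mul_pos hm2 ha0) h1) h2
  have hident : (m:ℝ) ^ 2 * a ^ 2 * (ℓ ^ 2 - a ^ 2)
      - (m:ℝ) ^ 2 * ((rp ^ 2 + a ^ 2) * (|a| * (ℓ - |a|))) = c₀ := by
    rw [hc₀def, ← hb2]; ring
  -- uniform lower bound over the λ-range
  have hAP : ∀ lam : ℝ, -(ℓ + a) / ℓ ^ 2 < lam → lam < (ℓ - a) / ℓ ^ 2 →
      c₀ < ((m:ℝ) * a) * (ωp - (m:ℝ) * lam) * (ℓ ^ 2 * (rp ^ 2 + a ^ 2)) := by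
    intro lam h1 h2
    have halam : a * lam * ℓ ^ 2 < |a| * (ℓ - |a|) := by
      rcases lt_or_gt_of_ne ha' with hneg | hpos
      · have h1' : -(ℓ + a) < lam * ℓ ^ 2 := by
          rwa [div_lt_iff₀ hℓ2] at h1
        rw [abs_of_neg hneg]
        nlinarith only [mul_pos (neg_pos.mpr hneg) (sub_pos.mpr h1')]
      · have h2' : lam * ℓ ^ 2 < ℓ - a := by
          rwa [lt_div_iff₀ hℓ2] at h2
        rw [abs_of_pos hpos]
        nlinarith only [mul_pos hpos (sub_pos.mpr h2')]
    have hX : 0 < (m:ℝ) ^ 2 * ((rp ^ 2 + a ^ 2) * (|a| * (ℓ - |a|) - a * lam * ℓ ^ 2)) :=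
      mul_pos hm2 (mul_pos hra (by linarith only [halam]))
    nlinarith only [hAωpD, hX, hident]
  -- derivative / slope control
  have hder : HasDerivAt ωR d 0 := by
    rw [hd]; exact (hdiff 0 ⟨by linarith, hδ⟩).hasDerivAt
  rw [hasDerivAt_iff_tendsto_slope] at hder
  have hη : 0 < |d| / 2 := by positivity
  obtain ⟨δ', hδ'pos, Hsl⟩ := Metric.tendsto_nhdsWithin_nhds.mp hder (|d| / 2) hη
  -- the smallness constants
  obtain ⟨K, hKdef⟩ : ∃ K : ℝ, K = -(((m:ℝ) * a) * d) * c₀ / 2 := ⟨_, rfl⟩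
  have hK : 0 < K := by
    have h1 : 0 < -(((m:ℝ) * a) * d) := by linarith only [hAd]
    rw [hKdef]
    exact div_pos (mul_pos h1 hc₀) two_pos
  have hma2 : (0:ℝ) < ((m:ℝ) * a) ^ 2 := by
    have h := mul_ne_zero hm ha'
    positivity
  have hA2D : 0 < ((m:ℝ) * a) ^ 2 * (ℓ ^ 2 * (rp ^ 2 + a ^ 2)) :=
    mul_pos hma2 (mul_pos hℓ2 hra)
  obtain ⟨M, hMdef⟩ : ∃ M : ℝ,
      M = ((m:ℝ) * a) ^ 2 * (ℓ ^ 2 * (rp ^ 2 + a ^ 2)) * ((3 * |d| / 2) ^ 2 + 1) := ⟨_, rfl⟩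
  have hM : 0 < M := by
    rw [hMdef]
    exact mul_pos hA2D (by positivity)
  have hKM : 0 < K / (2 * M) := div_pos hK (by linarith only [hM])
  refine ⟨min (min (δ / 2) δ') (K / (2 * M)),
    ⟨lt_min (lt_min (by linarith only [hδ]) hδ'pos) hKM, ?_⟩, ?_⟩
  · calc min (min (δ / 2) δ') (K / (2 * M)) ≤ min (δ / 2) δ' := min_le_left _ _
      _ ≤ δ / 2 := min_le_left _ _
      _ < δ := by linarith only [hδ]
  intro ε hε hε₀ lam hl1 hl2
  have hεδ' : ε < δ' := lt_of_lt_of_le hε₀ (le_trans (min_le_left _ _) (min_le_right _ _))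
  have hεK : ε < K / (2 * M) := lt_of_lt_of_le hε₀ (min_le_right _ _)
  have hεM : ε * M < K := by
    rw [lt_div_iff₀ (by linarith only [hM])] at hεK
    linarith only [hεK, mul_nonneg hε.le hM.le]
  -- slope estimate
  have hsl : |(ωR ε - ωp) / ε - d| < |d| / 2 := by
    have h := Hsl (x := ε) (by simp [ne_of_gt hε]) (by simp [Real.dist_eq, abs_of_pos hε, hεδ'])
    rw [Real.dist_eq, slope_def_field, hω0] at h
    simpa using h
  obtain ⟨u, hu⟩ : ∃ u : ℝ, u = ωR ε - ωp := ⟨_, rfl⟩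
  have hud : |u - ε * d| ≤ ε * (|d| / 2) := by
    have h1 : u - ε * d = ε * ((u / ε) - d) := by field_simp [hε.ne']
    rw [h1, abs_mul, abs_of_pos hε]
    rw [hu]
    exact mul_le_mul_of_nonneg_left hsl.le hε.le
  -- bound (ma)*u from above
  have habs1 : ((m:ℝ) * a) * (u - ε * d) ≤ |(m:ℝ) * a| * (ε * (|d| / 2)) := by
    calc ((m:ℝ) * a) * (u - ε * d) ≤ |((m:ℝ) * a) * (u - ε * d)| := le_abs_self _
      _ = |(m:ℝ) * a| * |u - ε * d| := abs_mul _ _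
      _ ≤ |(m:ℝ) * a| * (ε * (|d| / 2)) :=
          mul_le_mul_of_nonneg_left hud (abs_nonneg _)
  have hAdabs : |(m:ℝ) * a| * (ε * (|d| / 2)) = (-(((m:ℝ) * a) * d)) * (ε / 2) := by
    rw [show |(m:ℝ) * a| * (ε * (|d| / 2)) = |(m:ℝ) * a| * |d| * (ε / 2) by ring,
      ← abs_mul, abs_of_neg hAd]
  have hAu : ((m:ℝ) * a) * u ≤ ε * (((m:ℝ) * a) * d) / 2 := by
    have h2 : ((m:ℝ) * a) * (u - ε * d) ≤ (-(((m:ℝ) * a) * d)) * (ε / 2) := by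
      rw [← hAdabs]; exact habs1
    nlinarith only [h2]
  have hAuneg : ((m:ℝ) * a) * u < 0 := by
    have h3 : ε * (((m:ℝ) * a) * d) < 0 := mul_neg_of_pos_of_neg hε hAd
    linarith only [hAu, h3]
  -- bound |u|
  have huabs : |u| ≤ ε * (3 * |d|) / 2 := by
    have h1 : |u| ≤ |u - ε * d| + |ε * d| := by
      calc |u| = |(u - ε * d) + ε * d| := by congr 1; ring
        _ ≤ |u - ε * d| + |ε * d| := abs_add_le _ _
    rw [abs_mul, abs_of_pos hε] at h1
    linarith only [h1, hud]
  have hu2 : u ^ 2 ≤ (ε * (3 * |d|) / 2) ^ 2 := by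
    rw [← sq_abs u]
    exact pow_le_pow_left₀ (abs_nonneg u) huabs 2
  -- key product bound
  have hAPl := hAP lam hl1 hl2
  have hstep1 : ((m:ℝ) * a) * u * (((m:ℝ) * a) * (ωp - (m:ℝ) * lam) * (ℓ ^ 2 * (rp ^ 2 + a ^ 2)))
      ≤ ((m:ℝ) * a) * u * c₀ :=
    mul_le_mul_of_nonpos_left hAPl.le hAuneg.le
  have hstep2 : ((m:ℝ) * a) * u * c₀ ≤ (ε * (((m:ℝ) * a) * d) / 2) * c₀ :=
    mul_le_mul_of_nonneg_right hAu hc₀.le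
  -- final assembly
  have hgoal : (ωR ε ^ 2 + ε ^ 2) - ωR ε * ωp + (m:ℝ) * lam * (ωp - ωR ε)
      = u * (ωp - (m:ℝ) * lam) + u ^ 2 + ε ^ 2 := by
    rw [hu]; ring
  rw [hgoal]
  have h3 := mul_le_mul_of_nonneg_left hu2 hA2D.le
  have h4 := mul_lt_mul_of_pos_left hεM hε
  rw [hKdef, hMdef] at h4
  have hfinal : ((m:ℝ) * a) ^ 2 * (ℓ ^ 2 * (rp ^ 2 + a ^ 2)) *
      (u * (ωp - (m:ℝ) * lam) + u ^ 2 + ε ^ 2) < 0 := by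
    linarith only [hstep1, hstep2, h3, h4]
  by_contra hcon
  push_neg at hcon
  linarith only [hfinal, mul_nonneg hA2D.le hcon]
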